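/- arXiv:math/0312100 — 2 statements merged into one kernel-verified Lean document; each statement's English description precedes it below -/
import Mathlib

section
/- In the ring ℚ[[z]] of formal power series, exp( Σ_{k≥1} c_{k,k}·z^k ) = Σ_{k≥0} (6k)!/((2k)!·(3k)!) · z^k/72^k. -/
open PowerSeries Finset

/-- `q : ℕ → ℕ → ℤ` satisfies the defining recursion. -/
def IsQ (q : ℕ → ℕ → ℤ) : Prop :=
  q 0 0 = 1 ∧
  (∀ k j, k < j → q k j = 0) ∧
  (∀ k j, 1 ≤ k → j ≤ k →
    q k j = (2 * (k : ℤ) + 4 * (j : ℤ) - 2) * (if j = 0 then 0 else q (k - 1) (j - 1))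
      + ((j : ℤ) + 1) * q (k - 1) j
      + ∑ m ∈ Finset.range k, ∑ l ∈ Finset.range j, q m l * q (k - 1 - m) (j - 1 - l))

/-- `c : ℕ → ℕ → ℚ` satisfies the defining relations: `c k j = 0` for `j > k`, and
`q k j = (2k+4j)·c k j + (j+1)·c k (j+1)` for all `k ≥ 1` and `0 ≤ j ≤ k`. -/
def IsC (q : ℕ → ℕ → ℤ) (c : ℕ → ℕ → ℚ) : Prop :=
  (∀ k j, k < j → c k j = 0) ∧
  (∀ k j, 1 ≤ k → j ≤ k →
    (q k j : ℚ) = (2 * (k : ℚ) + 4 * (j : ℚ)) * c k j + ((j : ℚ) + 1) * c k (j + 1))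

/-- Composition (substitution) `g(h(z))` of formal power series over `ℚ`; this is the
usual substitution whenever `h` has zero constant term. -/
noncomputable def comp (g h : PowerSeries ℚ) : PowerSeries ℚ :=
  PowerSeries.mk fun n =>
    ∑ k ∈ Finset.range (n + 1), PowerSeries.coeff k g * PowerSeries.coeff n (h ^ k)

/-- The exponential `exp(f)` of a formal power series `f` with zero constant term,
obtained by substituting `f` into the exponential series. -/
noncomputable def expComp (f : PowerSeries ℚ) : PowerSeries ℚ :=
  comp (PowerSeries.exp ℚ) f

section AuxLemmas

lemma coeff_pow_zero {f : ℚ⟦X⟧} (hf : constantCoeff f = 0) {n k : ℕ} (h : n < k) :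
    coeff n (f ^ k) = 0 := by
  have : (X : ℚ⟦X⟧) ^ k ∣ f ^ k := pow_dvd_pow_of_dvd (PowerSeries.X_dvd_iff.mpr hf) k
  exact (PowerSeries.X_pow_dvd_iff.mp this) n h

lemma coeff_expComp (f : ℚ⟦X⟧) (n : ℕ) :
    coeff n (expComp f) = ∑ k ∈ range (n + 1), (1 / (k.factorial : ℚ)) * coeff n (f ^ k) := by
  simp [expComp, comp, coeff_exp, algebraMap_smul]

lemma constantCoeff_expComp (f : ℚ⟦X⟧) : constantCoeff (expComp f) = 1 := by
  rw [← coeff_zero_eq_constantCoeff_apply, coeff_expComp]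
  simp

lemma coeff_mul_expComp {f : ℚ⟦X⟧} (hf : constantCoeff f = 0) (g : ℚ⟦X⟧) (n : ℕ) :
    coeff n (g * expComp f)
      = ∑ k ∈ range (n + 1), (1 / (k.factorial : ℚ)) * coeff n (g * f ^ k) := by
  rw [coeff_mul, Finset.Nat.sum_antidiagonal_eq_sum_range_succ_mk]
  have key : ∀ m ∈ range (n+1), coeff m g * coeff (n - m) (expComp f)
      = ∑ k ∈ range (n+1), (1 / (k.factorial : ℚ)) * (coeff m g * coeff (n - m) (f ^ k)) := by
    intro m hm
    rw [coeff_expComp, Finset.mul_sum]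
    rw [mem_range] at hm
    have hsub : range (n - m + 1) ⊆ range (n + 1) := by
      apply range_subset_range.2; omega
    rw [Finset.sum_subset hsub]
    · exact Finset.sum_congr rfl fun k _ => by ring
    · intro k _ hk
      rw [mem_range, not_lt] at hk
      simp [coeff_pow_zero hf (show n - m < k by omega)]
  rw [Finset.sum_congr rfl key, Finset.sum_comm]
  apply Finset.sum_congr rfl
  intro k _
  rw [coeff_mul, Finset.Nat.sum_antidiagonal_eq_sum_range_succ_mk, Finset.mul_sum]

lemma derivative_expComp {f : ℚ⟦X⟧} (hf : constantCoeff f = 0) :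
    d⁄dX ℚ (expComp f) = d⁄dX ℚ f * expComp f := by
  ext n
  rw [coeff_derivative, coeff_expComp, coeff_mul_expComp hf, Finset.sum_mul]
  -- LHS: ∑_{k ∈ range (n+2)} (1/k!) coeff_{n+1} (f^k) * (n+1)
  -- turn each term into k * (1/k!) * coeff_n (f^(k-1) * df)
  have hterm : ∀ k : ℕ, (1 / (k.factorial : ℚ)) * coeff (n+1) (f ^ k) * ((n:ℚ)+1)
      = (k : ℚ) * (1 / (k.factorial : ℚ)) * coeff n (f ^ (k-1) * d⁄dX ℚ f) := by
    intro k
    have hd : d⁄dX ℚ (f ^ k) = (k : ℚ⟦X⟧) * (f ^ (k-1) * d⁄dX ℚ f) := by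
      have := Derivation.leibniz_pow (d⁄dX ℚ) (a := f) k
      simpa [smul_eq_mul, mul_comm, mul_assoc, mul_left_comm] using this
    have h2 : coeff (n+1) (f^k) * ((n:ℚ)+1) = coeff n (d⁄dX ℚ (f ^ k)) := by
      rw [coeff_derivative]
    rw [mul_assoc, h2, hd]
    have h3 : ((k : ℚ⟦X⟧)) = C (R := ℚ) (k : ℚ) := by push_cast; rfl
    rw [h3, coeff_C_mul]
    ring
  rw [Finset.sum_congr rfl fun k _ => hterm k]
  -- now reindex: ∑_{k ∈ range (n+2)} k * (1/k!) * T (k-1) = ∑_{j ∈ range (n+1)} (1/j!) * T j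
  rw [Finset.sum_range_succ']
  simp only [Nat.cast_zero, zero_mul, Nat.factorial_zero, add_zero]
  apply Finset.sum_congr rfl
  intro j _
  have h4 : ((j:ℚ)+1) * (1 / ((j+1).factorial : ℚ)) = 1 / (j.factorial : ℚ) := by
    rw [Nat.factorial_succ]
    have : (j.factorial : ℚ) ≠ 0 := by positivity
    push_cast
    field_simp
  push_cast
  rw [h4, mul_comm (d⁄dX ℚ f) (f ^ j)]

lemma diag_rec {q : ℕ → ℕ → ℤ} (hq : IsQ q) (k : ℕ) (hk : 1 ≤ k) :
    q k k = (6 * (k : ℤ) - 2) * q (k-1) (k-1)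
      + ∑ m ∈ range k, q m m * q (k - 1 - m) (k - 1 - m) := by
  obtain ⟨h0, hz, hrec⟩ := hq
  have h := hrec k k hk le_rfl
  rw [if_neg (by omega)] at h
  rw [hz (k-1) k (by omega)] at h
  have hsum : ∀ m ∈ range k, ∑ l ∈ range k, q m l * q (k - 1 - m) (k - 1 - l)
      = q m m * q (k - 1 - m) (k - 1 - m) := by
    intro m hm
    rw [mem_range] at hm
    apply Finset.sum_eq_single m
    · intro l hl hlm
      rw [mem_range] at hl
      rcases lt_or_gt_of_ne hlm with h1 | h1
      · rw [hz (k - 1 - m) (k - 1 - l) (by omega), mul_zero]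
      · rw [hz m l h1, zero_mul]
    · intro hmm
      exact absurd (mem_range.2 hm) hmm
  rw [Finset.sum_congr rfl hsum] at h
  rw [h]; push_cast; ring

-- the diagonal convolution identity
lemma conv_eq {q : ℕ → ℕ → ℤ} (hq : IsQ q) (s : ℕ) (hs : 1 ≤ s) :
    (∑ m ∈ range (s+1), ((q m m : ℚ)) * (q (s-m) (s-m) : ℚ))
      = 2 * (q s s : ℚ) +
        ∑ m ∈ range (s+1), (if m = 0 then 0 else (q m m : ℚ))
          * (if s - m = 0 then 0 else (q (s-m) (s-m) : ℚ)) := by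
  obtain ⟨h0, -, -⟩ := hq
  rw [Finset.sum_range_succ, Finset.sum_range_succ]
  obtain ⟨t, rfl⟩ : ∃ t, s = t + 1 := ⟨s - 1, by omega⟩
  rw [Finset.sum_range_succ', Finset.sum_range_succ']
  simp only [Nat.sub_self, if_pos rfl, Nat.sub_zero, h0, if_neg (Nat.succ_ne_zero t)]
  push_cast
  have h5 : ∀ m ∈ range t, (q (m+1) (m+1) : ℚ) * (q (t-m) (t-m) : ℚ)
      = (q (m+1) (m+1) : ℚ) * (if t - m = 0 then 0 else (q (t-m) (t-m) : ℚ)) := by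
    intro m hm
    rw [mem_range] at hm
    rw [if_neg (by omega)]
  rw [Finset.sum_congr rfl h5]
  ring

lemma cxm (n : ℕ) (p : ℚ⟦X⟧) : coeff n (X * p) = if 1 ≤ n then coeff (n-1) p else 0 := by
  rw [← pow_one (X : ℚ⟦X⟧)]; exact coeff_X_pow_mul' p 1 n

lemma riccati {q : ℕ → ℕ → ℤ} (hq : IsQ q) :
    (PowerSeries.mk fun k => if k = 0 then 0 else (q k k : ℚ))
      = C (R := ℚ) 6 * (X^2 * d⁄dX ℚ (PowerSeries.mk fun k => if k = 0 then 0 else (q k k : ℚ)))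
        + X * (PowerSeries.mk fun k => if k = 0 then 0 else (q k k : ℚ))^2
        + C (R := ℚ) 6 * (X * (PowerSeries.mk fun k => if k = 0 then 0 else (q k k : ℚ)))
        + C (R := ℚ) 5 * X := by
  set A : ℚ⟦X⟧ := PowerSeries.mk fun k => if k = 0 then 0 else (q k k : ℚ) with hA
  have cA : ∀ k, coeff k A = if k = 0 then 0 else (q k k : ℚ) := fun k => by
    rw [hA, coeff_mk]
  have ccA : constantCoeff A = 0 := by
    rw [← coeff_zero_eq_constantCoeff_apply, cA]; simp
  ext n
  simp only [map_add, coeff_C_mul, coeff_X_pow_mul', cxm]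
  rcases n with _ | n
  · simp [ccA, cA, coeff_X]
  rcases n with _ | n
  · -- n = 1 : LHS = q 1 1 = 5
    have h11 : q 1 1 = 5 := by
      obtain ⟨h0, hz, hrec⟩ := hq
      have := hrec 1 1 le_rfl le_rfl
      simp [h0, hz 0 1 (by omega)] at this
      omega
    rw [cA, if_neg (by omega)]
    rw [if_pos (by omega : 1 ≤ 0+1), if_pos (by omega : 1 ≤ 0+1), if_neg (by omega : ¬ (2 ≤ 0+1))]
    rw [show (0+1)-1 = 0 from rfl]
    rw [coeff_zero_eq_constantCoeff, map_pow, ccA, coeff_X]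
    norm_num [h11]
  · -- n = j + 2
    rw [cA, if_neg (by omega)]
    rw [if_pos (by omega : 2 ≤ n+1+1), if_pos (by omega : 1 ≤ n+1+1), if_pos (by omega : 1 ≤ n+1+1)]
    rw [show n+1+1-2 = n from rfl, show n+1+1-1 = n+1 from rfl]
    rw [coeff_derivative, cA, if_neg (by omega)]
    have e3 : coeff (n+1) (A^2)
        = ∑ m ∈ range (n+2), (if m = 0 then 0 else (q m m : ℚ))
            * (if n+1-m = 0 then 0 else (q (n+1-m) (n+1-m) : ℚ)) := by
      rw [pow_two, coeff_mul, Finset.Nat.sum_antidiagonal_eq_sum_range_succ_mk]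
      exact Finset.sum_congr rfl fun m _ => by rw [cA, cA]
    rw [e3, coeff_X, if_neg (by omega)]
    have hrec := diag_rec hq (n+2) (by omega)
    rw [show n+2-1 = n+1 from rfl] at hrec
    have hconv := conv_eq hq (n+1) (by omega)
    have hq2 : ((q (n+2) (n+2) : ℤ) : ℚ) = (6*((n:ℚ)+2) - 2) * (q (n+1) (n+1) : ℚ)
        + ∑ m ∈ range (n+2), (q m m : ℚ) * (q (n+1-m) (n+1-m) : ℚ) := by
      rw [hrec]; push_cast; ring
    rw [show n+1+1 = n+2 from rfl, hq2, hconv]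
    push_cast
    ring

-- factorial step lemma
lemma bfact (m : ℕ) :
    6*((m:ℚ)+1) * ((Nat.factorial (6*(m+1)) : ℚ) /
        ((Nat.factorial (2*(m+1)) : ℚ) * (Nat.factorial (3*(m+1)) : ℚ) * 72^(m+1)))
    = (36*(m:ℚ)^2+36*m+5) *
        ((Nat.factorial (6*m) : ℚ) / ((Nat.factorial (2*m) : ℚ) * (Nat.factorial (3*m) : ℚ) * 72^m)) := by
  have e6 : ((6*(m+1)).factorial : ℚ)
      = ((6*(m:ℚ)+6))*((6*m+5))*((6*m+4))*((6*m+3))*((6*m+2))*((6*m+1)) * ((6*m).factorial : ℚ) := by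
    rw [show 6*(m+1) = (6*m+5)+1 from by ring, Nat.factorial_succ,
      show 6*m+5 = (6*m+4)+1 from by ring, Nat.factorial_succ,
      show 6*m+4 = (6*m+3)+1 from by ring, Nat.factorial_succ,
      show 6*m+3 = (6*m+2)+1 from by ring, Nat.factorial_succ,
      show 6*m+2 = (6*m+1)+1 from by ring, Nat.factorial_succ,
      show 6*m+1 = (6*m)+1 from rfl, Nat.factorial_succ]
    push_cast; ring
  have e2 : ((2*(m+1)).factorial : ℚ) = ((2*(m:ℚ)+2))*((2*m+1)) * ((2*m).factorial : ℚ) := by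
    rw [show 2*(m+1) = (2*m+1)+1 from by ring, Nat.factorial_succ,
      show 2*m+1 = (2*m)+1 from rfl, Nat.factorial_succ]
    push_cast; ring
  have e3 : ((3*(m+1)).factorial : ℚ)
      = ((3*(m:ℚ)+3))*((3*m+2))*((3*m+1)) * ((3*m).factorial : ℚ) := by
    rw [show 3*(m+1) = (3*m+2)+1 from by ring, Nat.factorial_succ,
      show 3*m+2 = (3*m+1)+1 from by ring, Nat.factorial_succ,
      show 3*m+1 = (3*m)+1 from rfl, Nat.factorial_succ]
    push_cast; ring
  have n2 : ((2*m).factorial : ℚ) ≠ 0 := by positivity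
  have n3 : ((3*m).factorial : ℚ) ≠ 0 := by positivity
  have n72 : (72:ℚ)^m ≠ 0 := by positivity
  rw [e6, e2, e3, pow_succ]
  field_simp
  ring

end AuxLemmas

/-- In `ℚ⟦z⟧`, `exp(∑_{k≥1} c_{k,k} zᵏ) = ∑_{k≥0} (6k)!/((2k)!·(3k)!) · zᵏ/72ᵏ`. -/
theorem statement10 (q : ℕ → ℕ → ℤ) (hq : IsQ q) (c : ℕ → ℕ → ℚ) (hc : IsC q c) :
    expComp (PowerSeries.mk fun k => if k = 0 then 0 else c k k) =
      PowerSeries.mk fun k =>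
        (Nat.factorial (6 * k) : ℚ) /
          ((Nat.factorial (2 * k) : ℚ) * (Nat.factorial (3 * k) : ℚ) * 72 ^ k) := by
  set L : ℚ⟦X⟧ := PowerSeries.mk fun k => if k = 0 then 0 else c k k with hLdef
  set A : ℚ⟦X⟧ := PowerSeries.mk fun k => if k = 0 then 0 else (q k k : ℚ) with hAdef
  have hL0 : constantCoeff L = 0 := by
    rw [← coeff_zero_eq_constantCoeff_apply, hLdef, coeff_mk]; simp
  set E : ℚ⟦X⟧ := expComp L with hEdef
  -- relation q k k = 6 k * c k k for k ≥ 1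
  have hqc : ∀ k, 1 ≤ k → ((q k k : ℤ) : ℚ) = 6 * (k:ℚ) * c k k := by
    intro k hk
    have h := hc.2 k k hk le_rfl
    rw [hc.1 k (k+1) (by omega)] at h
    rw [h]; ring
  -- 6 X L' = A
  have h6L : C (R := ℚ) 6 * (X * d⁄dX ℚ L) = A := by
    ext n
    rw [coeff_C_mul, cxm, hAdef, coeff_mk]
    rcases n with _ | n
    · simp
    · rw [if_pos (by omega : 1 ≤ n+1), if_neg (Nat.succ_ne_zero n),
        show n+1-1 = n from rfl, coeff_derivative, hLdef, coeff_mk,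
        if_neg (Nat.succ_ne_zero n), hqc (n+1) (by omega)]
      push_cast; ring
  -- E' = L' E
  have hdE : d⁄dX ℚ E = d⁄dX ℚ L * E := derivative_expComp hL0
  have h1 : C (R := ℚ) 6 * (X * d⁄dX ℚ E) = A * E := by
    rw [hdE, ← h6L]; ring
  have h2 := congrArg (d⁄dX ℚ) h1
  simp only [Derivation.leibniz, derivative_C, derivative_X, smul_eq_mul, mul_zero, zero_add,
    add_zero, mul_one] at h2
  have ric := riccati hq
  rw [← hAdef] at ric
  have c36 : (C (R := ℚ) 36 : ℚ⟦X⟧) = C (R := ℚ) 6 * C (R := ℚ) 6 := by rw [← map_mul]; norm_num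
  have c72 : (C (R := ℚ) 72 : ℚ⟦X⟧) = C (R := ℚ) 6 * C (R := ℚ) 6 * 2 := by
    rw [show (2 : ℚ⟦X⟧) = C (R := ℚ) 2 from (map_ofNat (C (R := ℚ)) 2).symm, ← map_mul, ← map_mul]; norm_num
  have hXeq : X * (C (R := ℚ) 36 * (X^2 * d⁄dX ℚ (d⁄dX ℚ E)) + C (R := ℚ) 72 * (X * d⁄dX ℚ E) + C (R := ℚ) 5 * E)
      = X * (C (R := ℚ) 6 * d⁄dX ℚ E) := by
    rw [c36, c72]
    linear_combination (C (R := ℚ) 6 * X^2) * h2 - E * ric - (1 - C (R := ℚ) 6 * X - X * A) * h1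
  have hODE : C (R := ℚ) 36 * (X^2 * d⁄dX ℚ (d⁄dX ℚ E)) + C (R := ℚ) 72 * (X * d⁄dX ℚ E) + C (R := ℚ) 5 * E
      = C (R := ℚ) 6 * d⁄dX ℚ E :=
    mul_left_cancel₀ PowerSeries.X_ne_zero hXeq
  -- coefficient recursion for E
  have erec : ∀ m : ℕ, 6 * ((m:ℚ)+1) * coeff (m+1) E
      = (36*(m:ℚ)^2 + 36*m + 5) * coeff m E := by
    intro m
    rcases m with _ | m
    · have h := congrArg (coeff 0) hODE
      simp only [map_add, coeff_C_mul, coeff_X_pow_mul', cxm, coeff_derivative,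
        coeff_zero_eq_constantCoeff_apply] at h
      norm_num at h ⊢
      linarith [h]
    rcases m with _ | m
    · have h := congrArg (coeff 1) hODE
      simp only [map_add, coeff_C_mul, coeff_X_pow_mul', cxm, coeff_derivative] at h
      norm_num at h ⊢
      linarith [h]
    · have h := congrArg (coeff (m+2)) hODE
      simp only [map_add, coeff_C_mul, coeff_X_pow_mul', cxm, coeff_derivative] at h
      push_cast at h ⊢
      ring_nf at h ⊢
      linear_combination -h
  -- conclude coefficients equal
  ext n
  rw [coeff_mk]
  induction n with
  | zero =>
    rw [coeff_zero_eq_constantCoeff_apply, hEdef, constantCoeff_expComp]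
    norm_num
  | succ n ih =>
    have h6 : (6:ℚ) * ((n:ℚ)+1) ≠ 0 := by positivity
    apply mul_left_cancel₀ h6
    rw [erec n, ih, bfact n]
end

section
/- Let P := exp( Σ_{k≥1} c_{k,k}·z^k ) ∈ ℚ[[z]]. Then P satisfies the linear differential equation 6·P′ = 5·P + 36z²·P″ + 72z·P′, where P′ and P″ denote the first and second formal derivatives. -/
open PowerSeries Finset

/- ### Auxiliary lemmas -/

lemma aux_coeff_pow_eq_zero {f : PowerSeries ℚ} (hf : constantCoeff f = 0)
    {n k : ℕ} (h : n < k) : PowerSeries.coeff n (f ^ k) = 0 :=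
  X_pow_dvd_iff.mp (pow_dvd_pow_of_dvd (X_dvd_iff.mpr hf) k) n h

lemma aux_coeff_expComp (f : PowerSeries ℚ) (n : ℕ) :
    PowerSeries.coeff n (expComp f) = ∑ k ∈ Finset.range (n + 1),
      PowerSeries.coeff k (PowerSeries.exp ℚ) * PowerSeries.coeff n (f ^ k) :=
  by rw [expComp, comp, coeff_mk]

/-- Chain rule for `expComp`. -/
lemma aux_expComp_deriv (f : PowerSeries ℚ) (hf : constantCoeff f = 0) :
    d⁄dX ℚ (expComp f) = d⁄dX ℚ f * expComp f := by
  ext n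
  have key : ∀ k : ℕ, PowerSeries.coeff (n+1) (f ^ k) * (n+1)
      = (k : ℚ) * PowerSeries.coeff n (f ^ (k-1) * d⁄dX ℚ f) := by
    intro k
    rw [← coeff_derivative, Derivation.leibniz_pow, smul_eq_mul, nsmul_eq_mul,
      ← map_natCast (PowerSeries.C : ℚ →+* ℚ⟦X⟧) k, coeff_C_mul]
  have hmid : PowerSeries.coeff n (d⁄dX ℚ (expComp f))
      = ∑ j ∈ Finset.range (n+1), (j.factorial : ℚ)⁻¹ *
          PowerSeries.coeff n (f ^ j * d⁄dX ℚ f) := by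
    rw [coeff_derivative, aux_coeff_expComp, Finset.sum_mul]
    have : ∀ k ∈ Finset.range (n+2),
        PowerSeries.coeff k (PowerSeries.exp ℚ) * PowerSeries.coeff (n+1) (f ^ k) * (n+1)
        = (k.factorial : ℚ)⁻¹ * ((k:ℚ) * PowerSeries.coeff n (f ^ (k-1) * d⁄dX ℚ f)) := by
      intro k _
      rw [mul_assoc, key k, PowerSeries.coeff_exp]
      simp [one_div]
    rw [Finset.sum_congr rfl this, Finset.sum_range_succ']
    simp only [Nat.cast_zero, zero_mul, mul_zero, add_zero, Nat.add_sub_cancel]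
    apply Finset.sum_congr rfl
    intro j _
    have h2 : ((j.factorial : ℚ)) ≠ 0 := Nat.cast_ne_zero.mpr j.factorial_ne_zero
    rw [Nat.factorial_succ]
    push_cast
    field_simp
  rw [hmid, PowerSeries.coeff_mul]
  have : ∀ p ∈ HasAntidiagonal.antidiagonal n,
      PowerSeries.coeff p.1 (d⁄dX ℚ f) * PowerSeries.coeff p.2 (expComp f)
      = ∑ k ∈ Finset.range (n+1), (k.factorial : ℚ)⁻¹ *
          (PowerSeries.coeff p.1 (d⁄dX ℚ f) * PowerSeries.coeff p.2 (f ^ k)) := by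
    intro p hp
    rw [Finset.HasAntidiagonal.mem_antidiagonal] at hp
    rw [aux_coeff_expComp, Finset.mul_sum]
    rw [Finset.sum_subset (Finset.range_subset_range.mpr (by omega : p.2 + 1 ≤ n + 1))]
    · apply Finset.sum_congr rfl
      intro k _
      rw [PowerSeries.coeff_exp]
      simp [one_div]; ring
    · intro k _ hk
      rw [Finset.mem_range, not_lt] at hk
      rw [aux_coeff_pow_eq_zero hf (by omega), mul_zero, mul_zero]
  rw [Finset.sum_congr rfl this, Finset.sum_comm]
  apply Finset.sum_congr rfl
  intro k _
  rw [← Finset.mul_sum, ← PowerSeries.coeff_mul, mul_comm (d⁄dX ℚ f)]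

/-- The diagonal sequence `a k = q k k` satisfies a self-contained recursion. -/
lemma aux_diag_rec (q : ℕ → ℕ → ℤ) (hq : IsQ q) (k : ℕ) :
    q (k+1) (k+1) = (6*(k:ℤ)+4) * q k k
      + ∑ m ∈ Finset.range (k+1), q m m * q (k-m) (k-m) := by
  obtain ⟨h0, hvan, hrec⟩ := hq
  have h := hrec (k+1) (k+1) (by omega) le_rfl
  simp only [Nat.add_sub_cancel] at h
  rw [if_neg (by omega), hvan k (k+1) (by omega)] at h
  rw [h]
  have hs : ∀ m ∈ Finset.range (k+1),
      (∑ l ∈ Finset.range (k+1), q m l * q (k-m) (k-l)) = q m m * q (k-m) (k-m) := by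
    intro m hm
    rw [Finset.mem_range] at hm
    apply Finset.sum_eq_single_of_mem m (Finset.mem_range.mpr hm)
    intro l hl hne
    rw [Finset.mem_range] at hl
    rcases lt_or_gt_of_ne hne with h1 | h1
    · rw [hvan (k-m) (k-l) (by omega), mul_zero]
    · rw [hvan m l h1, zero_mul]
  rw [Finset.sum_congr rfl hs]
  push_cast
  ring

/-- The generating function `v = ∑ q_{n+1,n+1} zⁿ` satisfies a Riccati-type equation. -/
lemma aux_main_ode (q : ℕ → ℕ → ℤ) (hq : IsQ q) :
    (PowerSeries.mk fun n => (q (n+1) (n+1) : ℚ)) =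
      PowerSeries.C 5
      + PowerSeries.C 6 * (X^2 * d⁄dX ℚ (PowerSeries.mk fun n => (q (n+1) (n+1) : ℚ)))
      + X^2 * (PowerSeries.mk fun n => (q (n+1) (n+1) : ℚ))^2
      + PowerSeries.C 12 * (X * (PowerSeries.mk fun n => (q (n+1) (n+1) : ℚ))) := by
  set v : PowerSeries ℚ := PowerSeries.mk fun n => (q (n+1) (n+1) : ℚ) with hv
  have hXv : ∀ (g : ℚ⟦X⟧) (n : ℕ), PowerSeries.coeff n ((X:ℚ⟦X⟧) * g)
      = if 1 ≤ n then PowerSeries.coeff (n-1) g else 0 := by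
    intro g n
    rw [show (X:ℚ⟦X⟧) * g = X^1 * g by rw [pow_one], coeff_X_pow_mul']
  ext n
  rw [map_add, map_add, map_add, coeff_C, coeff_C_mul, coeff_C_mul,
    coeff_X_pow_mul', coeff_X_pow_mul', hXv, hv, coeff_mk]
  match n with
  | 0 =>
    norm_num
    have h := aux_diag_rec q hq 0
    rw [Finset.sum_range_one, hq.1] at h
    norm_num at h
    exact_mod_cast h
  | 1 =>
    norm_num [coeff_mk]
    have h := aux_diag_rec q hq 1
    rw [Finset.sum_range_succ, Finset.sum_range_one, hq.1] at h
    push_cast [h]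
    ring
  | (m+2) =>
    have h2 : (2 : ℕ) ≤ m + 2 := by omega
    have h1 : (1 : ℕ) ≤ m + 2 := by omega
    rw [if_pos h2, if_pos h2, if_pos h1, if_neg (by omega)]
    simp only [show m + 2 - 2 = m from rfl, show m + 2 - 1 = m + 1 from rfl]
    rw [coeff_derivative, coeff_mk, sq, PowerSeries.coeff_mul]
    rw [Finset.Nat.sum_antidiagonal_eq_sum_range_succ_mk]
    simp only [coeff_mk]
    have h := aux_diag_rec q hq (m+2)
    rw [Finset.sum_range_succ, Finset.sum_range_succ'] at h
    have hsum : ∀ i ∈ Finset.range (m+1),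
        q (i+1) (i+1) * q (m+2-(i+1)) (m+2-(i+1)) = q (i+1) (i+1) * q (m+1-i) (m+1-i) := by
      intro i _
      congr 2 <;> omega
    simp only [Nat.sub_self, Nat.sub_zero] at h
    rw [Finset.sum_congr rfl hsum, hq.1] at h
    have hsum2 : ∀ i ∈ Finset.range (m+1),
        ((q (i+1) (i+1) : ℚ)) * ((q (m-i+1) (m-i+1) : ℚ))
        = ((q (i+1) (i+1) * q (m+1-i) (m+1-i) : ℤ) : ℚ) := by
      intro i hi
      rw [Finset.mem_range] at hi
      push_cast
      congr 3 <;> omega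
    rw [Finset.sum_congr rfl hsum2, ← Int.cast_sum]
    push_cast [h]
    ring

/-- Let `P := exp(∑_{k≥1} c_{k,k} zᵏ) ∈ ℚ⟦z⟧`.  Then `P` satisfies the linear
differential equation `6·P′ = 5·P + 36z²·P″ + 72z·P′`. -/
theorem statement17 (q : ℕ → ℕ → ℤ) (hq : IsQ q) (c : ℕ → ℕ → ℚ) (hc : IsC q c)
    (P : PowerSeries ℚ)
    (hP : P = expComp (PowerSeries.mk fun k => if k = 0 then 0 else c k k)) :
    6 * d⁄dX ℚ P = 5 * P + 36 * PowerSeries.X ^ 2 * (d⁄dX ℚ (d⁄dX ℚ P)) +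
      72 * PowerSeries.X * d⁄dX ℚ P := by
  set f : ℚ⟦X⟧ := PowerSeries.mk fun k => if k = 0 then 0 else c k k with hfdef
  set u : ℚ⟦X⟧ := d⁄dX ℚ f with hu
  have hf0 : constantCoeff f = 0 := by
    rw [← coeff_zero_eq_constantCoeff_apply, hfdef, coeff_mk, if_pos rfl]
  have hP1 : d⁄dX ℚ P = u * P := by
    rw [hP]; exact aux_expComp_deriv f hf0
  have hP2 : d⁄dX ℚ (d⁄dX ℚ P) = (d⁄dX ℚ u) * P + u * (u * P) := by
    rw [hP1, Derivation.leibniz, smul_eq_mul, smul_eq_mul, hP1]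
    ring
  have hvu : (PowerSeries.mk fun n => (q (n+1) (n+1) : ℚ)) = PowerSeries.C 6 * u := by
    ext n
    rw [coeff_mk, coeff_C_mul, hu, coeff_derivative, hfdef, coeff_mk,
      if_neg (Nat.succ_ne_zero n)]
    have h := hc.2 (n+1) (n+1) (by omega) le_rfl
    rw [hc.1 (n+1) (n+1+1) (by omega)] at h
    rw [h]
    push_cast
    ring
  have hd6 : d⁄dX ℚ (PowerSeries.C 6 * u) = PowerSeries.C 6 * d⁄dX ℚ u := by
    rw [← smul_eq_C_mul, Derivation.map_smul, smul_eq_C_mul]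
  have hV := aux_main_ode q hq
  rw [hvu, hd6] at hV
  simp only [map_ofNat] at hV
  rw [hP2, hP1]
  linear_combination P * hV
end
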